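/- Let κ be an infinite regular cardinal and U a uniform p-point ultrafilter on κ. Let W be a family of at most κ many subsets of κ such that the intersection of any fewer than κ members of W is unbounded in κ (the strong κ-intersection property). Then there exists f : κ → κ such that the pushforward f_*(U) is a uniform p-point ultrafilter on κ containing every member of W; moreover, if U is κ-complete (closed under intersections of fewer than κ members), then so is f_*(U). In particular, every such family W extends to a p-point ultrafilter that is Rudin–Keisler below U. (This is the absolute, V-level form of the paper's theorem that a weak M-ultrafilter W belonging to a κ-model N admitting an N-p-point extends to an N-p-point.) -/

import Mathlib

open Cardinal

/-- A subset of the ordinals below `κ` (realized as the type `κ.ord.ToType`)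
is bounded if it is contained in a proper initial segment. -/
def Bdd {C : Type*} [Preorder C] (X : Set C) : Prop :=
  ∃ b : C, X ⊆ Set.Iio b

/-- `U` is a p-point ultrafilter on `κ`: for every `κ`-indexed family of members
of `U` there is a member of `U` almost contained (modulo a bounded set) in
every member of the family. -/
def IsPPoint {κ : Cardinal} (U : Ultrafilter κ.ord.ToType) : Prop :=
  ∀ X : κ.ord.ToType → Set κ.ord.ToType, (∀ a, X a ∈ U) →
    ∃ Y ∈ U, ∀ a, Bdd (Y \ X a)

/-- `U` is uniform: it contains every set whose complement is bounded. -/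
def IsUniform {κ : Cardinal} (U : Ultrafilter κ.ord.ToType) : Prop :=
  ∀ X : Set κ.ord.ToType, Bdd Xᶜ → X ∈ U

/-- `U` is `κ`-complete: closed under intersections of families of fewer than
`κ` of its members. -/
def IsKappaComplete (κ : Cardinal) (U : Ultrafilter κ.ord.ToType) : Prop :=
  ∀ s : Set (Set κ.ord.ToType), #s < κ → (∀ X ∈ s, X ∈ U) → ⋂₀ s ∈ U

/-- A subset of `κ.ord.ToType` of cardinality less than a regular `κ` is bounded. -/
lemma bdd_of_mk_lt {κ : Cardinal.{0}} (hκreg : κ.IsRegular)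
    (X : Set κ.ord.ToType) (hX : #X < κ) : Bdd X := by
  haveI : IsWellOrder κ.ord.ToType (· < ·) := isWellOrder_lt
  have hlim := Cardinal.isSuccLimit_ord hκreg.aleph0_le
  set f : X → Ordinal := fun x => Ordinal.typein (α := κ.ord.ToType) (· < ·) x.1 + 1 with hf
  have hfi : ∀ x, f x < κ.ord := fun x => by
    show Ordinal.typein (α := κ.ord.ToType) (· < ·) x.1 + 1 < κ.ord
    rw [Ordinal.add_one_eq_succ]
    exact hlim.succ_lt (Ordinal.typein_lt_self x.1)
  have hsup : iSup f < κ.ord := by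
    apply Ordinal.iSup_lt_ord _ hfi
    rwa [hκreg.cof_eq]
  refine ⟨Ordinal.enum (α := κ.ord.ToType) (· < ·)
    ⟨iSup f, by rw [Set.mem_Iio, Ordinal.type_toType]; exact hsup⟩, fun x hx => ?_⟩
  have h1 : f ⟨x, hx⟩ ≤ iSup f := Ordinal.le_iSup f ⟨x, hx⟩
  have h2 : Ordinal.typein (α := κ.ord.ToType) (· < ·) x < iSup f := by
    refine lt_of_lt_of_le ?_ h1
    show _ < Ordinal.typein (α := κ.ord.ToType) (· < ·) x + 1
    rw [Ordinal.add_one_eq_succ]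
    exact Order.lt_succ _
  rw [Set.mem_Iio]
  apply (Ordinal.typein_lt_typein (α := κ.ord.ToType) (· < ·)).1
  exact h2.trans_eq (Ordinal.typein_enum _ _).symm

lemma bdd_mono {C : Type*} [Preorder C] {X Y : Set C} (h : X ⊆ Y) (hY : Bdd Y) : Bdd X := by
  obtain ⟨b, hb⟩ := hY
  exact ⟨b, h.trans hb⟩

theorem statement3 (κ : Cardinal.{0}) (hκreg : κ.IsRegular)
    (U : Ultrafilter κ.ord.ToType)
    (hU_uniform : IsUniform U) (hU_pp : IsPPoint U)
    (W : κ.ord.ToType → Set κ.ord.ToType)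
    (hW : ∀ s : Set κ.ord.ToType, #s < κ → ¬ Bdd (⋂ i ∈ s, W i)) :
    ∃ f : κ.ord.ToType → κ.ord.ToType,
      IsUniform (U.map f) ∧ IsPPoint (U.map f) ∧
      (∀ i, W i ∈ U.map f) ∧
      (IsKappaComplete κ U → IsKappaComplete κ (U.map f)) := by
  have hnomax : NoMaxOrder κ.ord.ToType := Cardinal.noMaxOrder hκreg.aleph0_le
  -- cardinality of initial segments is < κ
  have hIio : ∀ b : κ.ord.ToType, #(Set.Iio b) < κ := fun b =>
    Cardinal.mk_Iio_ord_toType b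
  -- the choice of values
  have hchoice : ∀ α : κ.ord.ToType, ∃ x, x ∈ (⋂ i ∈ Set.Iic α, W i) ∧ α < x := by
    intro α
    obtain ⟨b, hb⟩ := exists_gt α
    have hcard : #(Set.Iic α) < κ := by
      refine lt_of_le_of_lt (Cardinal.mk_le_mk_of_subset ?_) (hIio b)
      intro x hx
      exact lt_of_le_of_lt hx hb
    have hnb := hW (Set.Iic α) hcard
    by_contra h
    push_neg at h
    apply hnb
    refine ⟨b, fun x hx => ?_⟩
    have := h x hx
    exact lt_of_le_of_lt this hb
  choose f hfmem hflt using hchoice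
  have hfW : ∀ i α, i ≤ α → f α ∈ W i := by
    intro i α hi
    have := hfmem α
    simp only [Set.mem_iInter] at this
    exact this i hi
  -- uniformity of the pushforward
  have huni : IsUniform (U.map f) := by
    intro X hX
    obtain ⟨b, hb⟩ := hX
    rw [Ultrafilter.mem_map]
    apply hU_uniform
    refine ⟨b, fun α hα => ?_⟩
    have : f α ∈ Xᶜ := hα
    exact lt_trans (hflt α) (hb this)
  refine ⟨f, huni, ?_, ?_, ?_⟩
  · -- p-point
    intro X hX
    have hX' : ∀ a, f ⁻¹' (X a) ∈ U := fun a => Ultrafilter.mem_map.1 (hX a)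
    obtain ⟨Y, hY, hYb⟩ := hU_pp (fun a => f ⁻¹' (X a)) hX'
    refine ⟨f '' Y, ?_, ?_⟩
    · rw [Ultrafilter.mem_map]
      exact Filter.mem_of_superset hY (Set.subset_preimage_image f Y)
    · intro a
      obtain ⟨b, hb⟩ := hYb a
      have hsub : f '' Y \ X a ⊆ f '' (Set.Iio b) := by
        rintro z ⟨⟨α, hα, rfl⟩, hz⟩
        exact ⟨α, hb ⟨hα, hz⟩, rfl⟩
      refine bdd_mono hsub (bdd_of_mk_lt hκreg _ ?_)
      exact lt_of_le_of_lt Cardinal.mk_image_le (hIio b)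
  · -- contains the W i
    intro i
    rw [Ultrafilter.mem_map]
    apply hU_uniform
    refine ⟨i, fun α hα => ?_⟩
    by_contra h
    simp only [Set.mem_Iio, not_lt] at h
    exact hα (hfW i α h)
  · -- completeness
    intro hcomp s hs hmem
    rw [Ultrafilter.mem_map]
    have : f ⁻¹' ⋂₀ s = ⋂₀ ((fun X => f ⁻¹' X) '' s) := by
      ext x
      simp [Set.mem_sInter]
    rw [this]
    apply hcomp
    · exact lt_of_le_of_lt Cardinal.mk_image_le hs
    · rintro X ⟨Y, hY, rfl⟩
      exact Ultrafilter.mem_map.1 (hmem Y hY)
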